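/- Fix a > 0, let G⁺ := [a, ∞) × ℝ³ and F⁺ := (0, 1/a] × ℝ³, and let h : G⁺ → F⁺, h(t,x) := (1/t, x/t), which is a homeomorphism. Let f be a causal homeomorphism of G⁺ and set f̂ := h ∘ f ∘ h⁻¹ : F⁺ → F⁺. Then f is asymptotically regular if and only if f̂ is regular in F₀ := {0} × ℝ³ (i.e. for every v ∈ ℝ³ the limit of f̂(s,w) as (s,w) → (0,v) within F⁺ exists), and in that case f⁺(v) equals the second (spatial) component of that limit, i.e. f⁺ = f̂₀. -/

import Mathlib

open Filter Topology Set

noncomputable section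

/-- Euclidean 3-space. -/
abbrev E3 : Type := EuclideanSpace ℝ (Fin 3)

/-- `G⁺ := [a, ∞) × ℝ³`, the Galilean space-time restricted to times `t ≥ a`. -/
def Gplus (a : ℝ) : Set (ℝ × E3) := Set.Ici a ×ˢ (Set.univ : Set E3)

/-- `F⁺ := (0, 1/a] × ℝ³`. -/
def Fplus (a : ℝ) : Set (ℝ × E3) := Set.Ioc 0 a⁻¹ ×ˢ (Set.univ : Set E3)

/-- The map `h(t,x) := (1/t, x/t)`, a homeomorphism between `G⁺` and `F⁺`
(its inverse is given by the same formula). -/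
def hMap (p : ℝ × E3) : ℝ × E3 := (p.1⁻¹, p.1⁻¹ • p.2)

/-- The semitrajectory which is the graph of the curve `γ` on `[t₀, ∞)`. -/
def semitraj (t₀ : ℝ) (γ : ℝ → E3) : Set (ℝ × E3) :=
  (fun t => (t, γ t)) '' Set.Ici t₀

/-- `S` is an asymptotically regular semitrajectory of `G⁺` (so with `t₀ ≥ a`) with
asymptotic velocity `v`: the graph of a continuous curve `γ : [t₀, ∞) → ℝ³`, `t₀ ≥ a`,
with `γ(t)/t → v`. -/
def HasAsympVelFrom (a : ℝ) (S : Set (ℝ × E3)) (v : E3) : Prop :=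
  ∃ t₀ : ℝ, a ≤ t₀ ∧ ∃ γ : ℝ → E3, ContinuousOn γ (Set.Ici t₀) ∧ S = semitraj t₀ γ ∧
    Tendsto (fun t : ℝ => t⁻¹ • γ t) atTop (𝓝 v)

/-- `F` is the asymptotic transform of the transformation `f` of `G⁺`: every
asymptotically regular semitrajectory with asymptotic velocity `v` is mapped by `f` to
one with asymptotic velocity `F v`. -/
def IsAsympTransformOn (a : ℝ) (f : ℝ × E3 → ℝ × E3) (F : E3 → E3) : Prop :=
  ∀ (v : E3) (S : Set (ℝ × E3)), HasAsympVelFrom a S v → HasAsympVelFrom a (f '' S) (F v)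

/-- `f` is asymptotically regular (as a transformation of `G⁺`). -/
def AsympRegOn (a : ℝ) (f : ℝ × E3 → ℝ × E3) : Prop :=
  ∃ F : E3 → E3, IsAsympTransformOn a f F

/-- Piecewise linear interpolation through prescribed nodes. -/
lemma exists_interp (τ : ℕ → ℝ) (hτ : StrictMono τ) (htop : Tendsto τ atTop atTop)
    (w : ℕ → E3) (v : E3) (hw : Tendsto w atTop (𝓝 v)) :
    ∃ u : ℝ → E3, ContinuousOn u (Set.Ici (τ 0)) ∧ (∀ n, u (τ n) = w n) ∧
      Tendsto u atTop (𝓝 v) := by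
  have hex : ∀ t : ℝ, ∃ n, t < τ (n + 1) := by
    intro t
    obtain ⟨N, hN⟩ := (tendsto_atTop.1 htop (t + 1)).exists
    exact ⟨N, lt_of_lt_of_le (by linarith) (hτ.monotone (Nat.le_succ N))⟩
  set k : ℝ → ℕ := fun t => Nat.find (hex t) with hk_def
  have hk_lt : ∀ t, t < τ (k t + 1) := fun t => Nat.find_spec (hex t)
  have hk_le : ∀ t n, t < τ (n + 1) → k t ≤ n := fun t n h => Nat.find_min' (hex t) h
  have hk_ge : ∀ t n, τ n ≤ t → n ≤ k t := by
    intro t n h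
    by_contra hlt
    push_neg at hlt
    have h2 : τ (k t + 1) ≤ τ n := hτ.monotone hlt
    exact absurd (hk_lt t) (not_lt.2 (h2.trans h))
  have hk_eq : ∀ n, k (τ n) = n :=
    fun n => le_antisymm (hk_le _ _ (hτ (Nat.lt_succ_self n))) (hk_ge _ _ le_rfl)
  have hτk_le : ∀ t, τ 0 ≤ t → τ (k t) ≤ t := by
    intro t ht
    rcases Nat.eq_zero_or_pos (k t) with h0 | hpos
    · rw [h0]; exact ht
    · have hlt' : k t - 1 < k t := Nat.sub_lt hpos one_pos
      have hmin := Nat.find_min (hex t) hlt'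
      push_neg at hmin
      calc τ (k t) = τ (k t - 1 + 1) := by congr 1; omega
      _ ≤ t := hmin
  set φ : ℕ → ℝ → E3 := fun n t => w n + ((t - τ n) / (τ (n+1) - τ n)) • (w (n+1) - w n)
    with hφ_def
  have hφc : ∀ n, Continuous (φ n) := by
    intro n
    exact continuous_const.add ((by fun_prop : Continuous fun t : ℝ => (t - τ n) / (τ (n+1) - τ n)).smul continuous_const)
  have hφ_left : ∀ n, φ n (τ n) = w n := by intro n; simp [hφ_def]
  have hφ_right : ∀ n, φ n (τ (n+1)) = w (n+1) := by
    intro n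
    have h : τ (n+1) - τ n ≠ 0 := sub_ne_zero.2 (hτ (Nat.lt_succ_self n)).ne'
    simp [hφ_def, div_self h]
  set u : ℝ → E3 := fun t => φ (k t) t with hu_def
  have hu_node : ∀ n, u (τ n) = w n := by
    intro n
    simp only [hu_def, hk_eq n]
    exact hφ_left n
  have hu_eq : ∀ n t, τ n ≤ t → t < τ (n+1) → u t = φ n t := by
    intro n t h1 h2
    have hk : k t = n := le_antisymm (hk_le t n h2) (hk_ge t n h1)
    simp only [hu_def, hk]
  refine ⟨u, ?_, hu_node, ?_⟩
  · intro t ht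
    rcases lt_or_eq_of_le (hτk_le t ht) with hlt | heqq
    · apply ContinuousAt.continuousWithinAt
      have hev : u =ᶠ[𝓝 t] φ (k t) := by
        have hmem : Set.Ioo (τ (k t)) (τ (k t + 1)) ∈ 𝓝 t := Ioo_mem_nhds hlt (hk_lt t)
        filter_upwards [hmem] with s hs
        exact hu_eq _ _ hs.1.le hs.2
      exact (hφc (k t)).continuousAt.congr hev.symm
    · rcases Nat.eq_zero_or_pos (k t) with h0 | hpos
      · have ht0 : t = τ 0 := by rw [← heqq, h0]
        refine ((hφc 0).continuousAt.continuousWithinAt).congr_of_eventuallyEq ?_ ?_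
        · have hmem : Set.Iio (τ 1) ∈ 𝓝[Set.Ici (τ 0)] t :=
            nhdsWithin_le_nhds (Iio_mem_nhds (by rw [ht0]; exact hτ Nat.zero_lt_one))
          filter_upwards [hmem, self_mem_nhdsWithin] with s hs1 hs2
          exact hu_eq 0 s hs2 hs1
        · rw [ht0, hu_node 0, hφ_left 0]
      · set n := k t with hn
        obtain ⟨m, hm⟩ : ∃ m, n = m + 1 := ⟨n - 1, by omega⟩
        have htn : t = τ n := heqq.symm
        have hright : ContinuousWithinAt u (Set.Ici t) t := by
          refine ((hφc n).continuousAt.continuousWithinAt).congr_of_eventuallyEq ?_ ?_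
          · have hmem : Set.Iio (τ (n+1)) ∈ 𝓝[Set.Ici t] t :=
              nhdsWithin_le_nhds (Iio_mem_nhds (by rw [htn]; exact hτ (Nat.lt_succ_self n)))
            filter_upwards [hmem, self_mem_nhdsWithin] with s hs1 hs2
            exact hu_eq n s (htn ▸ hs2) hs1
          · rw [htn, hu_node n, hφ_left n]
        have hleft : ContinuousWithinAt u (Set.Iic t) t := by
          refine ((hφc m).continuousAt.continuousWithinAt).congr_of_eventuallyEq ?_ ?_
          · have hmem : Set.Ioi (τ m) ∈ 𝓝[Set.Iic t] t :=
              nhdsWithin_le_nhds (Ioi_mem_nhds (by rw [htn, hm]; exact hτ (Nat.lt_succ_self m)))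
            filter_upwards [hmem, self_mem_nhdsWithin] with s hs1 hs2
            rcases lt_or_eq_of_le (show s ≤ t from hs2) with hlt2 | heq2
            · refine hu_eq m s hs1.le ?_
              rw [← hm, ← htn]; exact hlt2
            · rw [heq2, htn, hm, hu_node (m+1), hφ_right m]
          · rw [htn, hm, hu_node (m+1), hφ_right m]
        have hca : ContinuousAt u t := by
          have hun := hleft.union hright
          rw [Set.Iic_union_Ici] at hun
          exact (continuousWithinAt_univ u t).1 hun
        exact hca.continuousWithinAt
  · have hk_top : Tendsto k atTop atTop := by
      refine tendsto_atTop.2 fun n => ?_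
      filter_upwards [eventually_ge_atTop (τ n)] with t ht
      exact hk_ge t n ht
    have hbound : ∀ᶠ t in atTop, ‖u t - v‖ ≤ 2 * ‖w (k t) - v‖ + ‖w (k t + 1) - v‖ := by
      filter_upwards [eventually_ge_atTop (τ 0)] with t ht
      have hpos : (0:ℝ) < τ (k t + 1) - τ (k t) := by linarith [hτ (Nat.lt_succ_self (k t))]
      have hθ0 : 0 ≤ (t - τ (k t)) / (τ (k t+1) - τ (k t)) :=
        div_nonneg (by linarith [hτk_le t ht]) hpos.le
      have hθ1 : (t - τ (k t)) / (τ (k t+1) - τ (k t)) ≤ 1 :=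
        (div_le_one hpos).2 (by linarith [hk_lt t])
      have hrw : u t - v = (w (k t) - v) + ((t - τ (k t)) / (τ (k t+1) - τ (k t))) • (w (k t+1) - w (k t)) := by
        simp only [hu_def, hφ_def]; abel
      have h1 : ‖((t - τ (k t)) / (τ (k t+1) - τ (k t))) • (w (k t+1) - w (k t))‖ ≤ ‖w (k t+1) - w (k t)‖ := by
        rw [norm_smul, Real.norm_eq_abs, abs_of_nonneg hθ0]
        exact mul_le_of_le_one_left (norm_nonneg _) hθ1
      have h2 : ‖w (k t+1) - w (k t)‖ ≤ ‖w (k t+1) - v‖ + ‖v - w (k t)‖ :=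
        norm_sub_le_norm_sub_add_norm_sub _ _ _
      have h3 : ‖v - w (k t)‖ = ‖w (k t) - v‖ := norm_sub_rev _ _
      calc ‖u t - v‖ ≤ ‖w (k t) - v‖ + ‖((t - τ (k t)) / (τ (k t+1) - τ (k t))) • (w (k t+1) - w (k t))‖ := by
            rw [hrw]; exact norm_add_le _ _
        _ ≤ 2 * ‖w (k t) - v‖ + ‖w (k t + 1) - v‖ := by
            rw [h3] at h2; linarith
    have hwn : Tendsto (fun n => ‖w n - v‖) atTop (𝓝 0) :=
      tendsto_iff_norm_sub_tendsto_zero.1 hw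
    have hb : Tendsto (fun t => 2 * ‖w (k t) - v‖ + ‖w (k t + 1) - v‖) atTop (𝓝 0) := by
      have h1 : Tendsto (fun n : ℕ => 2 * ‖w n - v‖ + ‖w (n+1) - v‖) atTop (𝓝 0) := by
        have := (hwn.const_mul 2).add (hwn.comp (tendsto_add_atTop_nat 1))
        simpa using this
      exact h1.comp hk_top
    have hnorm : Tendsto (fun t => ‖u t - v‖) atTop (𝓝 0) :=
      squeeze_zero' (by filter_upwards with t; positivity) hbound hb
    exact tendsto_iff_norm_sub_tendsto_zero.2 hnorm

/-- The time component of a causal map is independent of the space variable. -/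
lemma time_indep (a : ℝ) (f : ℝ × E3 → ℝ × E3)
    (hcont : ContinuousOn f (Gplus a))
    (hcausal : ∀ u ∈ Gplus a, ∀ w ∈ Gplus a, u.1 < w.1 → (f u).1 < (f w).1) :
    ∀ t, a ≤ t → ∀ x y : E3, (f (t, x)).1 = (f (t, y)).1 := by
  have hG : ∀ p : ℝ × E3, p ∈ Gplus a ↔ a ≤ p.1 := fun p => by simp [Gplus]
  have key : ∀ t, a ≤ t → ∀ x y : E3, (f (t, y)).1 ≤ (f (t, x)).1 := by
    intro t hat x y
    have hc1 : ContinuousOn (fun s : ℝ => (f (s, x)).1) (Set.Ici a) := by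
      apply continuous_fst.comp_continuousOn
      apply hcont.comp (Continuous.continuousOn (by fun_prop))
      intro s hs
      exact (hG _).2 hs
    have hcw : Tendsto (fun s => (f (s, x)).1) (𝓝[>] t) (𝓝 ((f (t, x)).1)) :=
      (hc1 t hat).mono (fun s hs => hat.trans (le_of_lt hs))
    refine ge_of_tendsto hcw ?_
    filter_upwards [self_mem_nhdsWithin] with s hs
    exact le_of_lt (hcausal (t, y) ((hG _).2 hat) (s, x) ((hG _).2 (hat.trans (le_of_lt hs))) hs)
  exact fun t hat x y => le_antisymm (key t hat y x) (key t hat x y)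

/-- Fix `a > 0`, `G⁺ := [a, ∞) × ℝ³`, `F⁺ := (0, 1/a] × ℝ³`, and the
homeomorphism `h : G⁺ → F⁺`, `h(t,x) := (1/t, x/t)`.  Let `f` be a causal homeomorphism
of `G⁺` and `f̂ := h ∘ f ∘ h⁻¹ : F⁺ → F⁺`.  Then `f` is asymptotically regular if and
only if `f̂` is regular in `F₀ = {0} × ℝ³` (for every `v` the limit of `f̂(s,w)` as
`(s,w) → (0,v)` within `F⁺` exists), and in that case `f⁺(v)` is the second (spatial)
component of that limit (whose first component is `0`), i.e. `f⁺ = f̂₀`. -/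
theorem stmt11 (a : ℝ) (ha : 0 < a) (f finv : ℝ × E3 → ℝ × E3)
    (hbij : Set.BijOn f (Gplus a) (Gplus a))
    (hinv : Set.InvOn finv f (Gplus a) (Gplus a))
    (hcont : ContinuousOn f (Gplus a))
    (hcont' : ContinuousOn finv (Gplus a))
    (hcausal : ∀ u ∈ Gplus a, ∀ w ∈ Gplus a, u.1 < w.1 → (f u).1 < (f w).1) :
    (AsympRegOn a f ↔
      ∀ v : E3, ∃ L : ℝ × E3,
        Tendsto (fun p => hMap (f (hMap p)))
          (nhdsWithin ((0 : ℝ), v) (Fplus a)) (𝓝 L)) ∧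
    (∀ F : E3 → E3, IsAsympTransformOn a f F →
      ∀ v : E3, Tendsto (fun p => hMap (f (hMap p)))
        (nhdsWithin ((0 : ℝ), v) (Fplus a)) (𝓝 ((0 : ℝ), F v))) := by
  classical
  have hG : ∀ p : ℝ × E3, p ∈ Gplus a ↔ a ≤ p.1 := fun p => by simp [Gplus]
  have hFm : ∀ p : ℝ × E3, p ∈ Fplus a ↔ 0 < p.1 ∧ p.1 ≤ a⁻¹ := fun p => by
    simp [Fplus]
  have hind := time_indep a f hcont hcausal
  set fT : ℝ → ℝ := fun t => (f (t, 0)).1 with hfT_def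
  have hfT : ∀ (t : ℝ) (x : E3), a ≤ t → (f (t, x)).1 = fT t := fun t x hat => hind t hat x 0
  have hfT' : ∀ p ∈ Gplus a, (f p).1 = fT p.1 := by
    intro p hp
    have := hfT p.1 p.2 ((hG p).1 hp)
    rwa [Prod.mk.eta] at this
  have hfTmono : StrictMonoOn fT (Set.Ici a) := by
    intro s hs t ht hst
    exact hcausal (s, 0) ((hG _).2 hs) (t, 0) ((hG _).2 ht) hst
  have hfTa : ∀ t, a ≤ t → a ≤ fT t := by
    intro t hat
    exact (hG _).1 (hbij.mapsTo ((hG ((t : ℝ), (0 : E3))).2 hat))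
  have hfTtop : Tendsto fT atTop atTop := by
    rw [tendsto_atTop]
    intro M
    obtain ⟨q, hq, hfq⟩ := hbij.surjOn ((hG ((max M a : ℝ), (0 : E3))).2 (le_max_right M a))
    filter_upwards [eventually_gt_atTop q.1] with t ht
    have haq : a ≤ q.1 := (hG q).1 hq
    have hat : a ≤ t := haq.trans ht.le
    have h1 : (f q).1 < (f (t, 0)).1 := hcausal q hq (t, 0) ((hG _).2 hat) ht
    rw [hfq] at h1
    exact le_of_lt (lt_of_le_of_lt (le_max_left M a) h1)
  -- properties of the inverse
  have hmapsinv : Set.MapsTo finv (Gplus a) (Gplus a) := by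
    intro y hy
    obtain ⟨x, hx, hfx⟩ := hbij.surjOn hy
    rw [← hfx, hinv.1 hx]
    exact hx
  have hfinv_causal : ∀ u ∈ Gplus a, ∀ w ∈ Gplus a, u.1 < w.1 → (finv u).1 < (finv w).1 := by
    intro p hp q hq hpq
    by_contra hle
    push_neg at hle
    have h1 : fT (finv q).1 ≤ fT (finv p).1 :=
      hfTmono.monotoneOn ((hG _).1 (hmapsinv hq)) ((hG _).1 (hmapsinv hp)) hle
    have h2 : q.1 ≤ p.1 := by
      calc q.1 = (f (finv q)).1 := by rw [hinv.2 hq]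
      _ = fT (finv q).1 := hfT' _ (hmapsinv hq)
      _ ≤ fT (finv p).1 := h1
      _ = (f (finv p)).1 := (hfT' _ (hmapsinv hp)).symm
      _ = p.1 := by rw [hinv.2 hp]
    exact absurd hpq (not_lt.2 h2)
  have hindinv := time_indep a finv hcont' hfinv_causal
  set g : ℝ → ℝ := fun s => (finv (s, 0)).1 with hg_def
  have hg' : ∀ p ∈ Gplus a, (finv p).1 = g p.1 := by
    intro p hp
    have := hindinv p.1 ((hG p).1 hp) p.2 0
    rwa [Prod.mk.eta] at this
  have hga : ∀ s, a ≤ s → a ≤ g s := fun s has =>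
    (hG _).1 (hmapsinv ((hG ((s : ℝ), (0 : E3))).2 has))
  have hgfT : ∀ t, a ≤ t → g (fT t) = t := by
    intro t hat
    have hmem : ((t : ℝ), (0 : E3)) ∈ Gplus a := (hG _).2 hat
    have h1 : (finv (f (t, 0))).1 = g (f (t, 0)).1 := hg' _ (hbij.mapsTo hmem)
    rw [hinv.1 hmem] at h1
    exact h1.symm
  have hfTg : ∀ s, a ≤ s → fT (g s) = s := by
    intro s has
    have hmem : ((s : ℝ), (0 : E3)) ∈ Gplus a := (hG _).2 has
    have h1 : (f (finv (s, 0))).1 = fT (finv (s, 0)).1 := hfT' _ (hmapsinv hmem)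
    rw [hinv.2 hmem] at h1
    exact h1.symm
  have hgge : ∀ t₀, a ≤ t₀ → ∀ s, fT t₀ ≤ s → t₀ ≤ g s := by
    intro t₀ hat₀ s hs
    have has : a ≤ s := (hfTa t₀ hat₀).trans hs
    by_contra hlt
    push_neg at hlt
    have h2 : fT (g s) < fT t₀ := hfTmono (hga s has) hat₀ hlt
    rw [hfTg s has] at h2
    exact absurd hs (not_le.2 h2)
  have hgtop : Tendsto g atTop atTop := by
    rw [tendsto_atTop]
    intro M
    filter_upwards [eventually_ge_atTop (fT (max M a))] with s hs
    exact (le_max_left M a).trans (hgge _ (le_max_right M a) s hs)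
  have hgcont : ContinuousOn g (Set.Ici a) := by
    apply continuous_fst.comp_continuousOn
    apply hcont'.comp (Continuous.continuousOn (by fun_prop))
    intro s hs
    exact (hG _).2 hs
  have hinvol : ∀ (t : ℝ) (x : E3), t ≠ 0 → hMap (hMap (t, x)) = (t, x) := by
    intro t x ht
    simp [hMap, smul_smul, inv_inv, mul_inv_cancel₀ ht]
  -- the key direction: asymptotic transform gives the limit
  have main2 : ∀ F : E3 → E3, IsAsympTransformOn a f F →
      ∀ v : E3, Tendsto (fun p => hMap (f (hMap p)))
        (nhdsWithin ((0 : ℝ), v) (Fplus a)) (𝓝 ((0 : ℝ), F v)) := by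
    intro F hFt v
    by_contra hcon
    rw [Metric.tendsto_nhds] at hcon
    push_neg at hcon
    obtain ⟨ε, hε, hfreq⟩ := hcon
    have hfreq' : ∃ᶠ p in nhdsWithin ((0 : ℝ), v) (Fplus a),
        (p ∈ Fplus a ∧ ε ≤ dist (hMap (f (hMap p))) ((0 : ℝ), F v)) :=
      (hfreq.and_eventually eventually_mem_nhdsWithin).mono (fun p hp => ⟨hp.2, hp.1⟩)
    obtain ⟨p, hptend, hpprop⟩ := exists_seq_forall_of_frequently hfreq'
    have hpF : ∀ n, p n ∈ Fplus a := fun n => (hpprop n).1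
    have hpe : ∀ n, ε ≤ dist (hMap (f (hMap (p n)))) ((0 : ℝ), F v) := fun n => (hpprop n).2
    have hpv : Tendsto p atTop (𝓝 ((0 : ℝ), v)) := hptend.mono_right nhdsWithin_le_nhds
    set t : ℕ → ℝ := fun n => ((p n).1)⁻¹ with ht_def
    have hp1 : ∀ n, 0 < (p n).1 ∧ (p n).1 ≤ a⁻¹ := fun n => (hFm _).1 (hpF n)
    have hta : ∀ n, a ≤ t n := by
      intro n
      have h1 := (hp1 n).1
      have h2 := (hp1 n).2
      have h3 : (a⁻¹)⁻¹ ≤ ((p n).1)⁻¹ := inv_anti₀ h1 h2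
      rwa [inv_inv] at h3
    have ht0 : Tendsto (fun n => (p n).1) atTop (𝓝 0) := (continuous_fst.tendsto _).comp hpv
    have httop : Tendsto t atTop atTop := by
      have h1 : Tendsto (fun n => (p n).1) atTop (𝓝[>] 0) := by
        rw [tendsto_nhdsWithin_iff]
        exact ⟨ht0, Eventually.of_forall fun n => (hp1 n).1⟩
      exact tendsto_inv_nhdsGT_zero.comp h1
    have hw : Tendsto (fun n => (p n).2) atTop (𝓝 v) := (continuous_snd.tendsto _).comp hpv
    have key : ∀ j : ℕ, ∃ m : ℕ, j < m ∧ t j < t m := by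
      intro j
      obtain ⟨m, h1, h2⟩ := ((eventually_gt_atTop j).and (tendsto_atTop.1 httop (t j + 1))).exists
      exact ⟨m, h1, by linarith⟩
    choose nxt hnxt1 hnxt2 using key
    set ψ : ℕ → ℕ := fun n => Nat.rec 0 (fun _ prev => nxt prev) n with hψ_def
    have hψmono : StrictMono ψ := strictMono_nat_of_lt_succ fun n => hnxt1 (ψ n)
    set τ : ℕ → ℝ := fun n => t (ψ n) with hτ_def
    have hτmono : StrictMono τ := strictMono_nat_of_lt_succ fun n => hnxt2 (ψ n)
    have hψtop : Tendsto ψ atTop atTop := tendsto_atTop_mono hψmono.id_le tendsto_id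
    have hτtop : Tendsto τ atTop atTop := httop.comp hψtop
    set W : ℕ → E3 := fun n => (p (ψ n)).2 with hW_def
    have hWv : Tendsto W atTop (𝓝 v) := hw.comp hψtop
    obtain ⟨u, huc, hunode, hutend⟩ := exists_interp τ hτmono hτtop W v hWv
    set γ : ℝ → E3 := fun s => s • u s with hγ_def
    have hτ0a : a ≤ τ 0 := hta (ψ 0)
    have hS : HasAsympVelFrom a (semitraj (τ 0) γ) v := by
      refine ⟨τ 0, hτ0a, γ, continuousOn_id.smul huc, rfl, ?_⟩
      apply hutend.congr'
      filter_upwards [eventually_ge_atTop (1 : ℝ)] with s hs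
      show u s = s⁻¹ • γ s
      rw [hγ_def]
      show u s = s⁻¹ • s • u s
      rw [smul_smul, inv_mul_cancel₀ (by linarith), one_smul]
    obtain ⟨t₀', hat₀', γ', hγ'c, hEq, hγ'v⟩ := hFt v _ hS
    have hnode : ∀ n, γ (τ n) = τ n • W n := by
      intro n
      show τ n • u (τ n) = τ n • W n
      rw [hunode n]
    have hq2 : ∀ n, (f (τ n, γ (τ n))).2 = γ' ((f (τ n, γ (τ n))).1) := by
      intro n
      have hqmem : f (τ n, γ (τ n)) ∈ semitraj t₀' γ' := by
        rw [← hEq]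
        exact Set.mem_image_of_mem f ⟨τ n, hτmono.monotone (Nat.zero_le n), rfl⟩
      obtain ⟨s, hs, he⟩ := hqmem
      rw [← he]
    have hσtop : Tendsto (fun n => (f (τ n, γ (τ n))).1) atTop atTop := by
      apply Tendsto.congr' ?_ (hfTtop.comp hτtop)
      filter_upwards with n
      exact (hfT (τ n) (γ (τ n)) (hta (ψ n))).symm
    have hlim : Tendsto (fun n => hMap (f (τ n, γ (τ n)))) atTop (𝓝 ((0 : ℝ), F v)) := by
      have h1 : Tendsto (fun n => ((f (τ n, γ (τ n))).1)⁻¹) atTop (𝓝 0) :=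
        tendsto_inv_atTop_zero.comp hσtop
      have h2 : Tendsto (fun n => ((f (τ n, γ (τ n))).1)⁻¹ • γ' ((f (τ n, γ (τ n))).1))
          atTop (𝓝 (F v)) := hγ'v.comp hσtop
      have h3 := h1.prodMk_nhds h2
      apply h3.congr
      intro n
      show _ = hMap (f (τ n, γ (τ n)))
      rw [hMap, ← hq2 n]
    have hdist : Tendsto (fun n => dist (hMap (f (τ n, γ (τ n)))) ((0 : ℝ), F v)) atTop (𝓝 0) :=
      tendsto_iff_dist_tendsto_zero.1 hlim
    obtain ⟨n, hn⟩ := (hdist.eventually (gt_mem_nhds hε)).exists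
    have hid : hMap (p (ψ n)) = (τ n, γ (τ n)) := by
      rw [hnode n]
      show (((p (ψ n)).1)⁻¹, ((p (ψ n)).1)⁻¹ • (p (ψ n)).2) = _
      rfl
    have hcontr := hpe (ψ n)
    rw [hid] at hcontr
    linarith
  -- the converse direction
  have main1 : (∀ v : E3, ∃ L : ℝ × E3,
      Tendsto (fun p => hMap (f (hMap p))) (nhdsWithin ((0 : ℝ), v) (Fplus a)) (𝓝 L)) →
      AsympRegOn a f := by
    intro hL
    refine ⟨fun v => (hL v).choose.2, ?_⟩
    intro v S hS
    obtain ⟨t₀, hat₀, γ, hγc, rfl, hγv⟩ := hS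
    have hfTt₀ : a ≤ fT t₀ := hfTa t₀ hat₀
    have hsub : Set.Ici (fT t₀) ⊆ Set.Ici a := fun s hs => hfTt₀.trans hs
    have hmaps : Set.MapsTo g (Set.Ici (fT t₀)) (Set.Ici t₀) := fun s hs => hgge t₀ hat₀ s hs
    refine ⟨fT t₀, hfTt₀, fun s => (f (g s, γ (g s))).2, ?_, ?_, ?_⟩
    · apply continuous_snd.comp_continuousOn
      apply hcont.comp ((hgcont.mono hsub).prodMk ((hγc.comp (hgcont.mono hsub) hmaps)))
      intro s hs
      exact (hG _).2 (hat₀.trans (hmaps hs))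
    · ext q
      constructor
      · rintro ⟨z, ⟨r, hr, rfl⟩, rfl⟩
        have har : a ≤ r := hat₀.trans hr
        refine ⟨fT r, hfTmono.monotoneOn hat₀ har hr, ?_⟩
        have hgr : g (fT r) = r := hgfT r har
        show (fT r, (f (g (fT r), γ (g (fT r)))).2) = f (r, γ r)
        rw [hgr]
        exact Prod.ext (hfT r (γ r) har).symm rfl
      · rintro ⟨s, hs, rfl⟩
        have has : a ≤ s := hfTt₀.trans hs
        have hts : t₀ ≤ g s := hgge t₀ hat₀ s hs
        refine ⟨(g s, γ (g s)), ⟨g s, hts, rfl⟩, ?_⟩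
        show f (g s, γ (g s)) = (s, (f (g s, γ (g s))).2)
        refine Prod.ext ?_ rfl
        rw [hfT _ _ (hat₀.trans hts)]
        exact hfTg s has
    · have hLt : Tendsto (fun p => hMap (f (hMap p)))
          (nhdsWithin ((0 : ℝ), v) (Fplus a)) (𝓝 ((hL v).choose)) := (hL v).choose_spec
      have hcurve : Tendsto (fun r : ℝ => hMap (r, γ r)) atTop
          (nhdsWithin ((0 : ℝ), v) (Fplus a)) := by
        rw [tendsto_nhdsWithin_iff]
        constructor
        · exact tendsto_inv_atTop_zero.prodMk_nhds hγv
        · filter_upwards [eventually_ge_atTop a] with r hr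
          rw [hFm]
          refine ⟨show (0:ℝ) < r⁻¹ from inv_pos.2 (lt_of_lt_of_le ha hr), ?_⟩
          show r⁻¹ ≤ a⁻¹
          exact inv_anti₀ ha hr
      have hIm : Tendsto (fun r : ℝ => hMap (f (r, γ r))) atTop (𝓝 ((hL v).choose)) := by
        apply Tendsto.congr' ?_ (hLt.comp hcurve)
        filter_upwards [eventually_ge_atTop a] with r hr
        show hMap (f (hMap (hMap (r, γ r)))) = _
        rw [hinvol r (γ r) (by linarith)]
      have h2 : Tendsto (fun r : ℝ => ((f (r, γ r)).1)⁻¹ • (f (r, γ r)).2) atTop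
          (𝓝 ((hL v).choose.2)) := (continuous_snd.tendsto _).comp hIm
      have h3 : Tendsto (fun r : ℝ => (fT r)⁻¹ • (f (g (fT r), γ (g (fT r)))).2) atTop
          (𝓝 ((hL v).choose.2)) := by
        apply Tendsto.congr' ?_ h2
        filter_upwards [eventually_ge_atTop a] with r hr
        rw [hgfT r hr, hfT r (γ r) hr]
      have h4 := h3.comp hgtop
      apply Tendsto.congr' ?_ h4
      filter_upwards [eventually_ge_atTop a] with s hs
      show (fT (g s))⁻¹ • (f (g (fT (g s)), γ (g (fT (g s))))).2 = _
      rw [hfTg s hs]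
  refine ⟨⟨?_, main1⟩, main2⟩
  rintro ⟨F, hFt⟩ v
  exact ⟨((0 : ℝ), F v), main2 F hFt v⟩
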